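/- Let q = 2^(2s) for s ≥ 1. The number of orbits of the symmetric group S₃ acting on the set {(α : β) ∈ P¹(F_q) : α ≠ 0, β ≠ 0, α + β ≠ 0}, where the action is generated by (α : β) ↦ (β : α) and (α : β) ↦ (α : α + β), equals (q+2)/6. -/

import Mathlib

/-- The set `{(α, β) : αβ(α+β) ≠ 0}`, whose classes up to scalar form
`{(α : β) ∈ P¹(F_q) : α ≠ 0, β ≠ 0, α + β ≠ 0}`. -/
def goodPairs2 (F : Type*) [Field F] : Type _ :=
  {p : F × F // p.1 ≠ 0 ∧ p.2 ≠ 0 ∧ p.1 + p.2 ≠ 0}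

/-- Orbit relation on projective classes of good pairs under the `S₃`-action generated by
`(α : β) ↦ (β : α)` and `(α : β) ↦ (α : α + β)` (char 2, so `-(α+β) = α+β`):
two pairs are related iff one is a nonzero scalar multiple of one of the six
images `(α,β), (β,α), (α,α+β), (α+β,β), (α+β,α), (β,α+β)` of the other. -/
def relS3char2 (F : Type*) [Field F] (p q : goodPairs2 F) : Prop :=
  ∃ l : F, l ≠ 0 ∧ (
    q.1 = (l * p.1.1, l * p.1.2) ∨
    q.1 = (l * p.1.2, l * p.1.1) ∨
    q.1 = (l * p.1.1, l * (p.1.1 + p.1.2)) ∨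
    q.1 = (l * (p.1.1 + p.1.2), l * p.1.2) ∨
    q.1 = (l * (p.1.1 + p.1.2), l * p.1.1) ∨
    q.1 = (l * p.1.2, l * (p.1.1 + p.1.2)))

section Aux
variable {F : Type*} [Field F]

lemma keyfactor (h2 : (2:F) = 0) (x y : F) :
    (y^2+y+1)^3 * (x^2*(x+1)^2) + (x^2+x+1)^3 * (y^2*(y+1)^2)
      = (y + x) * (x*y + 1) * (y + x + 1) * ((x+1)*y + 1) * ((x+1)*y + x) * (x*y + x + 1) := by
  linear_combination (-1*x*y + -2*x*y^2 + -2*x*y^3 + -2*x*y^4 + -1*x*y^5 + -2*x^2*y + -3*x^2*y^2 + -3*x^2*y^3 + -3*x^2*y^4 + -2*x^2*y^5 + -2*x^3*y + -3*x^3*y^2 + -2*x^3*y^3 + -3*x^3*y^4 + -2*x^3*y^5 + -2*x^4*y + -3*x^4*y^2 + -3*x^4*y^3 + -3*x^4*y^4 + -2*x^4*y^5 + -1*x^5*y + -2*x^5*y^2 + -2*x^5*y^3 + -2*x^5*y^4 + -1*x^5*y^5) * h2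

noncomputable def jmap (x : F) : F := (x^2+x+1)^3 / (x^2*(x+1)^2)

lemma jmem (h2 : (2:F) = 0) {x y : F} (hx0 : x ≠ 0) (hx1 : x + 1 ≠ 0)
    (hy0 : y ≠ 0) (hy1 : y + 1 ≠ 0) :
    jmap y = jmap x ↔
      (y = x ∨ y = x⁻¹ ∨ y = x + 1 ∨ y = (x+1)⁻¹ ∨ y = x*(x+1)⁻¹ ∨ y = (x+1)*x⁻¹) := by
  have hdx : x^2*(x+1)^2 ≠ 0 := mul_ne_zero (pow_ne_zero _ (by assumption)) (pow_ne_zero _ (by assumption))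
  have hdy : y^2*(y+1)^2 ≠ 0 := mul_ne_zero (pow_ne_zero _ (by assumption)) (pow_ne_zero _ (by assumption))
  rw [jmap, jmap, div_eq_div_iff hdy hdx]
  have key : ((y^2+y+1)^3 * (x^2*(x+1)^2) = (x^2+x+1)^3 * (y^2*(y+1)^2)) ↔
      (y + x) * (x*y + 1) * (y + x + 1) * ((x+1)*y + 1) * ((x+1)*y + x) * (x*y + x + 1) = 0 := by
    rw [← keyfactor h2 x y]
    constructor
    · intro h; linear_combination h + ((x^2+x+1)^3 * (y^2*(y+1)^2))*h2
    · intro h; linear_combination h - ((x^2+x+1)^3 * (y^2*(y+1)^2))*h2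
  rw [key]
  constructor
  · intro h
    rcases mul_eq_zero.mp h with h | h
    rotate_left
    · refine Or.inr (Or.inr (Or.inr (Or.inr (Or.inr ?_))))
      field_simp
      linear_combination h - (x+1)*h2
    rcases mul_eq_zero.mp h with h | h
    rotate_left
    · refine Or.inr (Or.inr (Or.inr (Or.inr (Or.inl ?_))))
      field_simp
      linear_combination h - x*h2
    rcases mul_eq_zero.mp h with h | h
    rotate_left
    · refine Or.inr (Or.inr (Or.inr (Or.inl ?_)))
      field_simp
      linear_combination h - h2
    rcases mul_eq_zero.mp h with h | h
    rotate_left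
    · refine Or.inr (Or.inr (Or.inl ?_))
      linear_combination h - (x+1)*h2
    rcases mul_eq_zero.mp h with h | h
    · exact Or.inl (by linear_combination h - x*h2)
    · refine Or.inr (Or.inl ?_)
      field_simp
      linear_combination h - h2
  · rintro (h | h | h | h | h | h) <;> rw [h]
    · apply mul_eq_zero_of_left; apply mul_eq_zero_of_left
      apply mul_eq_zero_of_left; apply mul_eq_zero_of_left; apply mul_eq_zero_of_left
      linear_combination x*h2
    · apply mul_eq_zero_of_left; apply mul_eq_zero_of_left
      apply mul_eq_zero_of_left; apply mul_eq_zero_of_left; apply mul_eq_zero_of_right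
      rw [mul_inv_cancel₀ hx0]; linear_combination h2
    · apply mul_eq_zero_of_left; apply mul_eq_zero_of_left
      apply mul_eq_zero_of_left; apply mul_eq_zero_of_right
      linear_combination (x+1)*h2
    · apply mul_eq_zero_of_left; apply mul_eq_zero_of_left; apply mul_eq_zero_of_right
      rw [mul_inv_cancel₀ hx1]; linear_combination h2
    · apply mul_eq_zero_of_left; apply mul_eq_zero_of_right
      rw [show (x+1)*(x*(x+1)⁻¹) = x by field_simp]
      linear_combination x*h2
    · apply mul_eq_zero_of_right
      rw [show x*((x+1)*x⁻¹) = x+1 by field_simp]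
      linear_combination (x+1)*h2

lemma add_one_ne_zero (h2 : (2:F) = 0) {a : F} (ha : a ≠ 1) : a + 1 ≠ 0 :=
  fun h => ha (by linear_combination h - h2)

lemma ne_one_of_add (h2 : (2:F) = 0) {a : F} (ha : a + 1 ≠ 0) : a ≠ 1 :=
  fun h => ha (by rw [h]; linear_combination h2)

end Aux

section Main
variable {F : Type*} [Field F]

abbrev Xt (F : Type*) [Field F] : Type _ := {a : F // a ≠ 0 ∧ a ≠ 1}

def jrel (F : Type*) [Field F] (a b : Xt F) : Prop := jmap a.1 = jmap b.1

def downP (h2 : (2:F) = 0) (p : goodPairs2 F) : Xt F :=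
  ⟨p.1.1 / p.1.2, div_ne_zero p.2.1 p.2.2.1, fun h => p.2.2.2 (by
    have h' : p.1.1 = p.1.2 := (div_eq_one_iff_eq p.2.2.1).mp h
    linear_combination h' + p.1.2 * h2)⟩

def upP (h2 : (2:F) = 0) (a : Xt F) : goodPairs2 F :=
  ⟨(a.1, 1), a.2.1, one_ne_zero, add_one_ne_zero h2 a.2.2⟩

lemma rel_jeq (h2 : (2:F) = 0) {p q : goodPairs2 F} (h : relS3char2 F p q) :
    jrel F (downP h2 p) (downP h2 q) := by
  have hα := p.2.1; have hβ := p.2.2.1; have hαβ := p.2.2.2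
  have hq0 := q.2.1; have hq1 := q.2.2.1; have hq2 := q.2.2.2
  obtain ⟨l, hl, hc⟩ := h
  have hx0 : p.1.1/p.1.2 ≠ 0 := div_ne_zero hα hβ
  have hx1 : p.1.1/p.1.2 + 1 ≠ 0 := add_one_ne_zero h2 (downP h2 p).2.2
  have hy0 : q.1.1/q.1.2 ≠ 0 := div_ne_zero hq0 hq1
  have hy1 : q.1.1/q.1.2 + 1 ≠ 0 := add_one_ne_zero h2 (downP h2 q).2.2
  have key : jmap (q.1.1/q.1.2) = jmap (p.1.1/p.1.2) := by
    rw [jmem h2 hx0 hx1 hy0 hy1]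
    rcases hc with hc|hc|hc|hc|hc|hc <;> rw [hc]
    · exact Or.inl (mul_div_mul_left _ _ hl)
    · refine Or.inr (Or.inl ?_)
      rw [show ((l * p.1.2, l * p.1.1) : F × F).1 = l * p.1.2 from rfl,
        show ((l * p.1.2, l * p.1.1) : F × F).2 = l * p.1.1 from rfl,
        mul_div_mul_left _ _ hl, inv_div]
    · refine Or.inr (Or.inr (Or.inr (Or.inr (Or.inl ?_))))
      field_simp
    · refine Or.inr (Or.inr (Or.inl ?_))
      field_simp
    · refine Or.inr (Or.inr (Or.inr (Or.inr (Or.inr ?_))))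
      field_simp
    · refine Or.inr (Or.inr (Or.inr (Or.inl ?_)))
      field_simp
  exact key.symm

lemma jeq_rel (h2 : (2:F) = 0) {a b : Xt F} (h : jrel F a b) :
    relS3char2 F (upP h2 a) (upP h2 b) := by
  have hx0 := a.2.1
  have hx1 : a.1 + 1 ≠ 0 := add_one_ne_zero h2 a.2.2
  have hy0 := b.2.1
  have hy1 : b.1 + 1 ≠ 0 := add_one_ne_zero h2 b.2.2
  have h' : jmap b.1 = jmap a.1 := h.symm
  rw [jmem h2 hx0 hx1 hy0 hy1] at h'
  rcases h' with hb|hb|hb|hb|hb|hb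
  · exact ⟨1, one_ne_zero, Or.inl (by simp [upP, Prod.ext_iff, hb])⟩
  · exact ⟨a.1⁻¹, inv_ne_zero hx0, Or.inr (Or.inl
      (by simp [upP, Prod.ext_iff, hb, inv_mul_cancel₀ hx0]))⟩
  · exact ⟨1, one_ne_zero, Or.inr (Or.inr (Or.inr (Or.inl
      (by simp [upP, Prod.ext_iff, hb]))))⟩
  · exact ⟨(a.1+1)⁻¹, inv_ne_zero hx1, Or.inr (Or.inr (Or.inr (Or.inr (Or.inr
      (by simp [upP, Prod.ext_iff, hb, inv_mul_cancel₀ hx1])))))⟩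
  · exact ⟨(a.1+1)⁻¹, inv_ne_zero hx1, Or.inr (Or.inr (Or.inl
      (by simp [upP, Prod.ext_iff, hb, inv_mul_cancel₀ hx1, mul_comm])))⟩
  · exact ⟨a.1⁻¹, inv_ne_zero hx0, Or.inr (Or.inr (Or.inr (Or.inr (Or.inl
      (by simp [upP, Prod.ext_iff, hb, inv_mul_cancel₀ hx0, mul_comm])))))⟩

noncomputable def quotEquiv (h2 : (2:F) = 0) : Quot (relS3char2 F) ≃ Quot (jrel F) where
  toFun := Quot.lift (fun p => Quot.mk _ (downP h2 p)) (fun p q h => Quot.sound (rel_jeq h2 h))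
  invFun := Quot.lift (fun a => Quot.mk _ (upP h2 a)) (fun a b h => Quot.sound (jeq_rel h2 h))
  left_inv := by
    intro q
    induction q using Quot.ind with
    | _ p =>
      apply Quot.sound
      refine ⟨p.1.2, p.2.2.1, Or.inl ?_⟩
      rw [Prod.ext_iff]
      constructor
      · show p.1.1 = p.1.2 * (p.1.1 / p.1.2)
        rw [mul_comm, div_mul_cancel₀ _ p.2.2.1]
      · show p.1.2 = p.1.2 * 1
        rw [mul_one]
  right_inv := by
    intro q
    induction q using Quot.ind with
    | _ a => exact congrArg _ (Subtype.ext (div_one a.1))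

end Main

/-- For `q = 2^(2s)` the number of orbits of `S₃` on
`{(α : β) ∈ P¹(F_q) : α ≠ 0, β ≠ 0, α + β ≠ 0}` is `(q+2)/6`. -/
theorem stmt_9 (F : Type*) [Field F] [Fintype F] (s : ℕ) (hs : 1 ≤ s)
    (hq : Fintype.card F = 2 ^ (2 * s)) :
    6 * Nat.card (Quot (relS3char2 F)) = 2 ^ (2 * s) + 2 := by
  classical
  have hs2 : 2*s ≠ 0 := by omega
  have h2 : (2:F) = 0 := by
    have hc : ((Fintype.card F : F)) = 0 := FiniteField.cast_card_eq_zero F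
    rw [hq] at hc
    push_cast at hc
    exact (pow_eq_zero_iff hs2).mp hc
  -- existence of a primitive cube root of unity
  have h3dvd : (3:ℕ) ∣ Fintype.card Fˣ := by
    rw [Fintype.card_units, hq, pow_mul]
    norm_num
    have h4 := Nat.pow_mod 4 s 3
    norm_num at h4
    have h5 : 1 ≤ 4^s := Nat.one_le_pow _ _ (by norm_num)
    omega
  obtain ⟨u, hu⟩ := exists_prime_orderOf_dvd_card (G := Fˣ) 3 h3dvd
  set ω : F := (u:F) with hωdef
  have hω3 : ω^3 = 1 := by
    have h := pow_orderOf_eq_one u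
    rw [hu] at h
    have h' := congrArg (Units.val) h
    rw [Units.val_pow_eq_pow_val, Units.val_one] at h'
    exact h'
  have hω1 : ω ≠ 1 := by
    intro h
    have h' : u = 1 := Units.ext h
    rw [h', orderOf_one] at hu
    exact (by norm_num : (1:ℕ) ≠ 3) hu
  have hω0 : ω ≠ 0 := Units.ne_zero u
  have hwc : ω^2+ω+1 = 0 := by
    have hf : (ω+1)*(ω^2+ω+1) = 0 := by linear_combination hω3 + (ω^2+ω+1)*h2
    rcases mul_eq_zero.mp hf with h|h
    · exact absurd (by linear_combination h - h2 : ω = 1) hω1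
    · exact h
  have hω1' : ω + 1 ≠ 0 := add_one_ne_zero h2 hω1
  have hω10 : ω + 1 ≠ 1 := fun h => hω0 (by linear_combination h)
  set jX : Xt F → F := fun a => jmap a.1 with hjX
  set t : Finset F := Finset.univ.image jX with ht
  -- the number of classes is the number of j-values
  have hNat : Nat.card (Quot (relS3char2 F)) = t.card := by
    have E2 : Quot (jrel F) ≃ {b // b ∈ t} :=
      { toFun := Quot.lift (fun a => ⟨jX a, Finset.mem_image_of_mem _ (Finset.mem_univ a)⟩)
          (fun a b h => Subtype.ext h)
        invFun := fun b => Quot.mk _ (Finset.mem_image.mp b.2).choose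
        left_inv := by
          intro q
          induction q using Quot.ind with
          | _ a =>
            exact Quot.sound ((Finset.mem_image.mp
              (Finset.mem_image_of_mem jX (Finset.mem_univ a))).choose_spec.2)
        right_inv := by
          intro b
          exact Subtype.ext (Finset.mem_image.mp b.2).choose_spec.2 }
    rw [Nat.card_congr ((quotEquiv h2).trans E2), Nat.card_eq_fintype_card, Fintype.card_coe]
  -- fiberwise count
  have hfib : (Finset.univ : Finset (Xt F)).card
      = ∑ b ∈ t, (Finset.univ.filter fun a => jX a = b).card :=
    Finset.card_eq_sum_card_fiberwise (fun x _ => Finset.mem_image_of_mem _ (Finset.mem_univ x))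
  -- j(a) = 0 iff a ∈ {ω, ω+1}
  have hzero_iff : ∀ a : Xt F, jX a = 0 ↔ (a.1 = ω ∨ a.1 = ω+1) := by
    intro a
    have hd : a.1^2*(a.1+1)^2 ≠ 0 :=
      mul_ne_zero (pow_ne_zero _ a.2.1) (pow_ne_zero _ (add_one_ne_zero h2 a.2.2))
    have hnum : jX a = 0 ↔ a.1^2+a.1+1 = 0 := by
      rw [hjX]
      show jmap a.1 = 0 ↔ _
      rw [jmap, div_eq_zero_iff]
      simp [hd, pow_eq_zero_iff]
    rw [hnum]
    have hfac : (a.1+ω)*(a.1+(ω+1)) = a.1^2+a.1+1 := by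
      linear_combination hwc + (a.1*ω - 1)*h2
    constructor
    · intro h
      rw [← hfac] at h
      rcases mul_eq_zero.mp h with h'|h'
      · exact Or.inl (by linear_combination h' - ω*h2)
      · exact Or.inr (by linear_combination h' - (ω+1)*h2)
    · rintro (h|h) <;> rw [h]
      · exact hwc
      · linear_combination hwc + (ω+1)*h2
  have hωmem : jX ⟨ω, hω0, hω1⟩ = 0 := (hzero_iff _).mpr (Or.inl rfl)
  have h0t : (0:F) ∈ t := by
    rw [ht]
    exact Finset.mem_image.mpr ⟨⟨ω, hω0, hω1⟩, Finset.mem_univ _, hωmem⟩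
  have hfib0 : (Finset.univ.filter fun a : Xt F => jX a = 0).card = 2 := by
    have hset : (Finset.univ.filter fun a : Xt F => jX a = 0)
        = {⟨ω, hω0, hω1⟩, ⟨ω+1, hω1', hω10⟩} := by
      ext a
      simp only [Finset.mem_filter, Finset.mem_univ, true_and, Finset.mem_insert,
        Finset.mem_singleton, Subtype.ext_iff]
      exact hzero_iff a
    rw [hset]
    rw [Finset.card_insert_of_notMem, Finset.card_singleton]
    simp only [Finset.mem_singleton, Subtype.ext_iff]
    exact fun h => one_ne_zero (by linear_combination -h : (1:F) = 0)
  have hfib6 : ∀ b ∈ t.erase 0, (Finset.univ.filter fun a : Xt F => jX a = b).card = 6 := by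
    intro b hb
    have hb0 : b ≠ 0 := (Finset.mem_erase.mp hb).1
    obtain ⟨x₀, -, hx₀⟩ := Finset.mem_image.mp (Finset.mem_erase.mp hb).2
    obtain ⟨x, hx0, hxne1⟩ := x₀
    have hx1 : x + 1 ≠ 0 := add_one_ne_zero h2 hxne1
    have hxb : jmap x = b := hx₀
    have hcne : x^2+x+1 ≠ 0 := by
      intro h
      apply hb0
      rw [← hxb, jmap, h]
      simp
    have sq0 : ∀ z : F, z^2 = 0 → z = 0 := fun z h => (pow_eq_zero_iff (two_ne_zero)).mp h
    have i2 : x⁻¹ ≠ 0 ∧ x⁻¹ ≠ 1 := ⟨inv_ne_zero hx0, by rw [Ne, inv_eq_one]; exact hxne1⟩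
    have i3 : (x+1) ≠ 0 ∧ (x+1) ≠ 1 := ⟨hx1, fun h => hx0 (by linear_combination h)⟩
    have i4 : (x+1)⁻¹ ≠ 0 ∧ (x+1)⁻¹ ≠ 1 := ⟨inv_ne_zero hx1, by rw [Ne, inv_eq_one]; exact i3.2⟩
    have i5 : x*(x+1)⁻¹ ≠ 0 ∧ x*(x+1)⁻¹ ≠ 1 := ⟨mul_ne_zero hx0 (inv_ne_zero hx1), by
      rw [← div_eq_mul_inv]
      intro h
      have h' := (div_eq_one_iff_eq hx1).mp h
      exact one_ne_zero (by linear_combination -h' : (1:F) = 0)⟩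
    have i6 : (x+1)*x⁻¹ ≠ 0 ∧ (x+1)*x⁻¹ ≠ 1 := ⟨mul_ne_zero hx1 (inv_ne_zero hx0), by
      rw [← div_eq_mul_inv]
      intro h
      have h' := (div_eq_one_iff_eq hx0).mp h
      exact one_ne_zero (by linear_combination h' : (1:F) = 0)⟩
    have d12 : x ≠ x⁻¹ := by
      intro h; field_simp at h
      exact hx1 (sq0 _ (by linear_combination h + (x+1)*h2))
    have d13 : x ≠ x+1 := by
      intro h; exact one_ne_zero (by linear_combination -h : (1:F) = 0)
    have d14 : x ≠ (x+1)⁻¹ := by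
      intro h; field_simp at h
      exact hcne (by linear_combination h + h2)
    have d15 : x ≠ x*(x+1)⁻¹ := by
      intro h; field_simp at h
      exact hx0 (by linear_combination h)
    have d16 : x ≠ (x+1)*x⁻¹ := by
      intro h; field_simp at h
      exact hcne (by linear_combination h + (x+1)*h2)
    have d23 : x⁻¹ ≠ x+1 := by
      intro h; field_simp at h
      exact hcne (by linear_combination -h + h2)
    have d24 : x⁻¹ ≠ (x+1)⁻¹ := by
      intro h
      exact one_ne_zero (by linear_combination -(inv_inj.mp h) : (1:F) = 0)
    have d25 : x⁻¹ ≠ x*(x+1)⁻¹ := by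
      intro h; field_simp at h
      exact hcne (by linear_combination -h + (x+1)*h2)
    have d26 : x⁻¹ ≠ (x+1)*x⁻¹ := by
      intro h; field_simp at h
      exact hx0 (by linear_combination -h)
    have d34 : x+1 ≠ (x+1)⁻¹ := by
      intro h; field_simp at h
      exact hx0 (sq0 x (by linear_combination h - x*h2))
    have d35 : x+1 ≠ x*(x+1)⁻¹ := by
      intro h; field_simp at h
      exact hcne (by linear_combination h)
    have d36 : x+1 ≠ (x+1)*x⁻¹ := by
      intro h; field_simp at h
      exact hxne1 h
    have d45 : (x+1)⁻¹ ≠ x*(x+1)⁻¹ := by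
      intro h; field_simp at h
      exact hxne1 (by linear_combination -h)
    have d46 : (x+1)⁻¹ ≠ (x+1)*x⁻¹ := by
      intro h; field_simp at h
      exact hcne (by linear_combination -h)
    have d56 : x*(x+1)⁻¹ ≠ (x+1)*x⁻¹ := by
      intro h; field_simp at h
      exact one_ne_zero (by linear_combination -h - x*h2 : (1:F) = 0)
    have hmem : ∀ c : F, c ≠ 0 → c ≠ 1 → (jmap c = b ↔
        (c = x ∨ c = x⁻¹ ∨ c = x + 1 ∨ c = (x+1)⁻¹ ∨ c = x*(x+1)⁻¹ ∨ c = (x+1)*x⁻¹)) := by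
      intro c hc0 hc1
      rw [← hxb]
      exact jmem h2 hx0 hx1 hc0 (add_one_ne_zero h2 hc1)
    have himg : (Finset.univ.filter fun a : Xt F => jX a = b).image Subtype.val
        = ({x, x⁻¹, x+1, (x+1)⁻¹, x*(x+1)⁻¹, (x+1)*x⁻¹} : Finset F) := by
      ext c
      simp only [Finset.mem_image, Finset.mem_filter, Finset.mem_univ, true_and,
        Finset.mem_insert, Finset.mem_singleton]
      constructor
      · rintro ⟨a, ha, rfl⟩
        exact (hmem a.1 a.2.1 a.2.2).mp ha
      · intro hc
        have hc0 : c ≠ 0 := by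
          rcases hc with rfl|rfl|rfl|rfl|rfl|rfl
          exacts [hx0, i2.1, i3.1, i4.1, i5.1, i6.1]
        have hc1 : c ≠ 1 := by
          rcases hc with rfl|rfl|rfl|rfl|rfl|rfl
          exacts [hxne1, i2.2, i3.2, i4.2, i5.2, i6.2]
        exact ⟨⟨c, hc0, hc1⟩, (hmem c hc0 hc1).mpr hc, rfl⟩
    have hScard : ({x, x⁻¹, x+1, (x+1)⁻¹, x*(x+1)⁻¹, (x+1)*x⁻¹} : Finset F).card = 6 := by
      rw [Finset.card_insert_of_notMem (by simp [d12, d13, d14, d15, d16]),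
        Finset.card_insert_of_notMem (by simp [d23, d24, d25, d26]),
        Finset.card_insert_of_notMem (by simp [d34, d35, d36]),
        Finset.card_insert_of_notMem (by simp [d45, d46]),
        Finset.card_insert_of_notMem (by simp [d56]),
        Finset.card_singleton]
    rw [← Finset.card_image_of_injective _ Subtype.val_injective, himg, hScard]

  rw [← Finset.add_sum_erase t _ h0t, hfib0, Finset.sum_congr rfl hfib6,
    Finset.sum_const, smul_eq_mul] at hfib
  have hEc : (t.erase 0).card + 1 = t.card := Finset.card_erase_add_one h0t
  -- cardinality of Xt F
  have hXcard : (Finset.univ : Finset (Xt F)).card + 2 = Fintype.card F := by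
    have himg : (Finset.univ : Finset (Xt F)).image Subtype.val
        = Finset.univ \ {0, 1} := by
      ext c
      simp only [Finset.mem_image, Finset.mem_univ, true_and, Finset.mem_sdiff,
        Finset.mem_insert, Finset.mem_singleton]
      constructor
      · rintro ⟨a, rfl⟩
        push_neg
        exact ⟨a.2.1, a.2.2⟩
      · intro h
        push_neg at h
        exact ⟨⟨c, h.1, h.2⟩, rfl⟩
    have h1 : ((Finset.univ : Finset (Xt F)).image Subtype.val).card
        = (Finset.univ : Finset (Xt F)).card :=
      Finset.card_image_of_injective _ Subtype.val_injective
    have h2' : ({0, 1} : Finset F).card = 2 := by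
      rw [Finset.card_insert_of_notMem (by simp), Finset.card_singleton]
    have h3 : ({0, 1} : Finset F) ⊆ Finset.univ := Finset.subset_univ _
    have h4 := Finset.card_sdiff_of_subset h3
    have h5 : 2 ≤ Fintype.card F := Fintype.one_lt_card
    rw [himg, h4, Finset.card_univ, h2'] at h1
    omega
  rw [hNat]
  omega
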